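/- Let f : ℝ × ℂ^p × ℂ^p → ℂ^p be bounded, continuous, almost automorphic uniformly on compact subsets of ℂ^p × ℂ^p, and uniformly continuous on compact subsets of ℂ^p × ℂ^p uniformly in t ∈ ℝ. If ψ : ℝ → ℂ^p is almost automorphic (in Bochner's sense), then the function t ↦ f(t, ψ(t), ψ(⌊t⌋)) is Z-almost automorphic. -/

import Mathlib

open MeasureTheory Filter Topology

/-- Bounded, piecewise continuous: continuous on ℝ ∖ ℤ with finite one-sided
limits at every integer. -/
def BddPC (p : ℕ) (f : ℝ → Fin p → ℂ) : Prop :=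
  (∃ C : ℝ, ∀ t : ℝ, ‖f t‖ ≤ C) ∧
  ContinuousOn f {t : ℝ | ∀ n : ℤ, t ≠ (n : ℝ)} ∧
  ∀ n : ℤ, (∃ L : Fin p → ℂ, Tendsto f (𝓝[<] (n : ℝ)) (𝓝 L)) ∧
           (∃ R : Fin p → ℂ, Tendsto f (𝓝[>] (n : ℝ)) (𝓝 R))

/-- `ℤ`-almost automorphic functions. -/
def ZAlmostAutomorphic (p : ℕ) (f : ℝ → Fin p → ℂ) : Prop :=
  BddPC p f ∧
  ∀ s : ℕ → ℤ, ∃ (φ : ℕ → ℕ) (g : ℝ → Fin p → ℂ), StrictMono φ ∧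
    (∀ t : ℝ, Tendsto (fun n => f (t + (s (φ n) : ℝ))) atTop (𝓝 (g t))) ∧
    (∀ t : ℝ, Tendsto (fun n => g (t - (s (φ n) : ℝ))) atTop (𝓝 (f t)))

/-- Almost automorphic functions in the sense of Bochner. -/
def AlmostAutomorphic (p : ℕ) (f : ℝ → Fin p → ℂ) : Prop :=
  (∃ C : ℝ, ∀ t : ℝ, ‖f t‖ ≤ C) ∧ Continuous f ∧
  ∀ s : ℕ → ℝ, ∃ (φ : ℕ → ℕ) (g : ℝ → Fin p → ℂ), StrictMono φ ∧
    (∀ t : ℝ, Tendsto (fun n => f (t + s (φ n))) atTop (𝓝 (g t))) ∧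
    (∀ t : ℝ, Tendsto (fun n => g (t - s (φ n))) atTop (𝓝 (f t)))

/-- Almost automorphy, uniformly on compact subsets of `ℂ^p × ℂ^p`, for a function
`f : ℝ × ℂ^p × ℂ^p → ℂ^p`. -/
def AAUniformOnCompact2 (p : ℕ) (f : ℝ → (Fin p → ℂ) → (Fin p → ℂ) → Fin p → ℂ) : Prop :=
  ∀ K : Set ((Fin p → ℂ) × (Fin p → ℂ)), IsCompact K → ∀ s : ℕ → ℝ,
    ∃ (φ : ℕ → ℕ) (g : ℝ → (Fin p → ℂ) → (Fin p → ℂ) → Fin p → ℂ), StrictMono φ ∧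
      (∀ t : ℝ, ∀ z ∈ K, Tendsto (fun n => f (t + s (φ n)) z.1 z.2) atTop (𝓝 (g t z.1 z.2))) ∧
      (∀ t : ℝ, ∀ z ∈ K, Tendsto (fun n => g (t - s (φ n)) z.1 z.2) atTop (𝓝 (f t z.1 z.2)))

/-- If `f : ℝ × ℂ^p × ℂ^p → ℂ^p` is bounded, continuous, almost automorphic uniformly
on compact subsets of `ℂ^p × ℂ^p`, uniformly continuous on compact subsets of
`ℂ^p × ℂ^p` uniformly in `t ∈ ℝ`, and `ψ` is almost automorphic (in Bochner's sense),
then `t ↦ f (t, ψ(t), ψ(⌊t⌋))` is `ℤ`-almost automorphic. -/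


-- helper: limits pass through moving arguments under uniform continuity
lemma tendsto_of_ucAux {E F : Type*} [NormedAddCommGroup E] [NormedAddCommGroup F]
    (K : Set E) (G : ℕ → E → F)
    (huc : ∀ ε > (0:ℝ), ∃ δ > (0:ℝ), ∀ n, ∀ z ∈ K, ∀ w ∈ K,
      ‖z - w‖ < δ → ‖G n z - G n w‖ ≤ ε)
    {z : ℕ → E} (hzK : ∀ n, z n ∈ K) {z₀ : E} (hz₀ : z₀ ∈ K)
    (hz : Tendsto z atTop (𝓝 z₀)) {L : F}
    (hG : Tendsto (fun n => G n z₀) atTop (𝓝 L)) :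
    Tendsto (fun n => G n (z n)) atTop (𝓝 L) := by
  rw [NormedAddCommGroup.tendsto_atTop] at hG ⊢
  intro ε hε
  obtain ⟨δ, hδ, hK⟩ := huc (ε/3) (by linarith)
  obtain ⟨N₁, hN₁⟩ := hG (ε/3) (by linarith)
  obtain ⟨N₂, hN₂⟩ := NormedAddCommGroup.tendsto_atTop.mp hz δ hδ
  refine ⟨max N₁ N₂, fun n hn => ?_⟩
  have h1 := hK n (z n) (hzK n) z₀ hz₀ (hN₂ n (le_of_max_le_right hn))
  have h2 := hN₁ n (le_of_max_le_left hn)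
  have heq : G n (z n) - L = (G n (z n) - G n z₀) + (G n z₀ - L) := by abel
  calc ‖G n (z n) - L‖ ≤ ‖G n (z n) - G n z₀‖ + ‖G n z₀ - L‖ := by
        rw [heq]; exact norm_add_le _ _
    _ < ε := by linarith

lemma floor_eventually_eq {t : ℝ} (ht : ∀ n : ℤ, t ≠ (n : ℝ)) :
    ∀ᶠ s in 𝓝 t, ⌊s⌋ = ⌊t⌋ := by
  have h1 : (⌊t⌋ : ℝ) < t := lt_of_le_of_ne (Int.floor_le t) (Ne.symm (ht ⌊t⌋))
  have h2 : t < ⌊t⌋ + 1 := Int.lt_floor_add_one t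
  filter_upwards [Ioo_mem_nhds h1 h2] with s hs
  exact Int.floor_eq_iff.mpr ⟨hs.1.le, by exact_mod_cast hs.2⟩

theorem zAlmostAutomorphic_superposition_floor {p : ℕ}
    (f : ℝ → (Fin p → ℂ) → (Fin p → ℂ) → Fin p → ℂ)
    (hbdd : ∃ C : ℝ, ∀ (t : ℝ) (x y : Fin p → ℂ), ‖f t x y‖ ≤ C)
    (hcont : Continuous fun q : ℝ × (Fin p → ℂ) × (Fin p → ℂ) => f q.1 q.2.1 q.2.2)
    (haa : AAUniformOnCompact2 p f)
    (huc : ∀ K : Set ((Fin p → ℂ) × (Fin p → ℂ)), IsCompact K →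
      ∀ ε > (0 : ℝ), ∃ δ > (0 : ℝ), ∀ t : ℝ, ∀ z ∈ K, ∀ w ∈ K,
        ‖z - w‖ < δ → ‖f t z.1 z.2 - f t w.1 w.2‖ < ε)
    (ψ : ℝ → Fin p → ℂ) (hψ : AlmostAutomorphic p ψ) :
    ZAlmostAutomorphic p (fun t : ℝ => f t (ψ t) (ψ ((⌊t⌋ : ℤ) : ℝ))) := by
  obtain ⟨⟨C, hC⟩, hψc, hψaa⟩ := hψ
  have hψcont : Continuous ψ := hψc
  constructor
  · refine ⟨?_, ?_, ?_⟩
    · obtain ⟨D, hD⟩ := hbdd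
      exact ⟨D, fun t => hD t _ _⟩
    · -- continuity on non-integers
      intro t ht
      apply ContinuousAt.continuousWithinAt
      have hG : ContinuousAt (fun s : ℝ => f s (ψ s) (ψ ((⌊t⌋ : ℤ) : ℝ))) t := by
        exact (hcont.comp (continuous_id.prodMk
          (hψcont.prodMk continuous_const))).continuousAt
      refine hG.congr ?_
      filter_upwards [floor_eventually_eq ht] with s hs
      rw [hs]
    · intro n
      constructor
      · -- left limit: floor = n - 1 on Ioo (n-1) n
        refine ⟨f (n : ℝ) (ψ (n : ℝ)) (ψ ((n - 1 : ℤ) : ℝ)), ?_⟩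
        have hmem : Set.Ioo ((n : ℝ) - 1) (n : ℝ) ∈ 𝓝[<] (n : ℝ) :=
          Ioo_mem_nhdsLT_of_mem ⟨by linarith, le_refl _⟩
        have hcont' : Tendsto (fun s : ℝ => f s (ψ s) (ψ ((n - 1 : ℤ) : ℝ)))
            (𝓝[<] (n : ℝ)) (𝓝 (f (n : ℝ) (ψ (n : ℝ)) (ψ ((n - 1 : ℤ) : ℝ)))) :=
          ((hcont.comp (continuous_id.prodMk
            (hψcont.prodMk continuous_const))).continuousAt).tendsto.mono_left
            nhdsWithin_le_nhds
        refine hcont'.congr' ?_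
        filter_upwards [hmem] with s hs
        have : ⌊s⌋ = n - 1 := by
          refine Int.floor_eq_iff.mpr ⟨?_, ?_⟩ <;> push_cast <;>
            [exact hs.1.le; linarith [hs.2]]
        rw [this]
      · refine ⟨f (n : ℝ) (ψ (n : ℝ)) (ψ ((n : ℤ) : ℝ)), ?_⟩
        have hmem : Set.Ioo ((n : ℝ)) ((n : ℝ) + 1) ∈ 𝓝[>] (n : ℝ) :=
          Ioo_mem_nhdsGT_of_mem ⟨le_refl _, by linarith⟩
        have hcont' : Tendsto (fun s : ℝ => f s (ψ s) (ψ ((n : ℤ) : ℝ)))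
            (𝓝[>] (n : ℝ)) (𝓝 (f (n : ℝ) (ψ (n : ℝ)) (ψ ((n : ℤ) : ℝ)))) :=
          ((hcont.comp (continuous_id.prodMk
            (hψcont.prodMk continuous_const))).continuousAt).tendsto.mono_left
            nhdsWithin_le_nhds
        refine hcont'.congr' ?_
        filter_upwards [hmem] with s hs
        have : ⌊s⌋ = n := by
          refine Int.floor_eq_iff.mpr ⟨hs.1.le, ?_⟩; exact_mod_cast hs.2
        rw [this]
  · intro s
    obtain ⟨φ₁, gψ, hφ₁, h1, h2⟩ := hψaa (fun n => (s n : ℝ))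
    have hgψC : ∀ t, ‖gψ t‖ ≤ C := fun t =>
      le_of_tendsto ((h1 t).norm) (Eventually.of_forall fun n => hC _)
    set K : Set ((Fin p → ℂ) × (Fin p → ℂ)) :=
      (Metric.closedBall 0 C) ×ˢ (Metric.closedBall 0 C) with hKdef
    have hK : IsCompact K := (isCompact_closedBall _ _).prod (isCompact_closedBall _ _)
    have hmemK : ∀ x y : Fin p → ℂ, ‖x‖ ≤ C → ‖y‖ ≤ C → (x, y) ∈ K := by
      intro x y hx hy
      exact ⟨mem_closedBall_zero_iff.mpr hx, mem_closedBall_zero_iff.mpr hy⟩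
    obtain ⟨φ₂, gf, hφ₂, hf1, hf2⟩ := haa K hK (fun n => (s (φ₁ n) : ℝ))
    set σ : ℕ → ℤ := fun n => s (φ₁ (φ₂ n)) with hσdef
    have hc2 : Tendsto φ₂ atTop atTop := hφ₂.tendsto_atTop
    refine ⟨φ₁ ∘ φ₂, fun t => gf t (gψ t) (gψ ((⌊t⌋ : ℤ) : ℝ)), hφ₁.comp hφ₂, ?_, ?_⟩
    · intro t
      have hz₀ : ((gψ t, gψ ((⌊t⌋ : ℤ) : ℝ)) : _ × _) ∈ K := hmemK _ _ (hgψC _) (hgψC _)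
      have key : Tendsto (fun n => f (t + (σ n : ℝ))
          (ψ (t + (σ n : ℝ))) (ψ (((⌊t⌋ : ℤ) : ℝ) + (σ n : ℝ)))) atTop
          (𝓝 (gf t (gψ t) (gψ ((⌊t⌋ : ℤ) : ℝ)))) := by
        refine tendsto_of_ucAux K (fun n z => f (t + (σ n : ℝ)) z.1 z.2) ?_
          (fun n => hmemK _ _ (hC _) (hC _)) hz₀ ?_ ?_
        · intro ε hε
          obtain ⟨δ, hδ, hd⟩ := huc K hK ε hε
          exact ⟨δ, hδ, fun n z hz w hw hzw => (hd _ z hz w hw hzw).le⟩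
        · exact ((h1 t).comp hc2).prodMk_nhds ((h1 ((⌊t⌋ : ℤ) : ℝ)).comp hc2)
        · exact hf1 t _ hz₀
      refine key.congr fun n => ?_
      simp only [Function.comp_apply]
      rw [show ((s (φ₁ (φ₂ n)) : ℤ)) = σ n from rfl, Int.floor_add_intCast]
      push_cast
      ring_nf
    · intro t
      have hz₀ : ((ψ t, ψ ((⌊t⌋ : ℤ) : ℝ)) : _ × _) ∈ K := hmemK _ _ (hC _) (hC _)
      have hucg : ∀ ε > (0:ℝ), ∃ δ > (0:ℝ), ∀ n, ∀ z ∈ K, ∀ w ∈ K,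
          ‖z - w‖ < δ → ‖gf (t - (σ n : ℝ)) z.1 z.2 - gf (t - (σ n : ℝ)) w.1 w.2‖ ≤ ε := by
        intro ε hε
        obtain ⟨δ, hδ, hd⟩ := huc K hK ε hε
        refine ⟨δ, hδ, fun n z hz w hw hzw => ?_⟩
        have hz' := hf1 (t - (σ n : ℝ)) z hz
        have hw' := hf1 (t - (σ n : ℝ)) w hw
        exact le_of_tendsto ((hz'.sub hw').norm)
          (Eventually.of_forall fun m => (hd _ z hz w hw hzw).le)
      have key : Tendsto (fun n => gf (t - (σ n : ℝ))
          (gψ (t - (σ n : ℝ))) (gψ (((⌊t⌋ : ℤ) : ℝ) - (σ n : ℝ)))) atTop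
          (𝓝 (f t (ψ t) (ψ ((⌊t⌋ : ℤ) : ℝ)))) := by
        refine tendsto_of_ucAux K (fun n z => gf (t - (σ n : ℝ)) z.1 z.2) hucg
          (fun n => hmemK _ _ (hgψC _) (hgψC _)) hz₀ ?_ ?_
        · exact ((h2 t).comp hc2).prodMk_nhds ((h2 ((⌊t⌋ : ℤ) : ℝ)).comp hc2)
        · exact hf2 t _ hz₀
      refine key.congr fun n => ?_
      simp only [Function.comp_apply]
      rw [show ((s (φ₁ (φ₂ n)) : ℤ)) = σ n from rfl, Int.floor_sub_intCast]
      push_cast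
      ring_nf
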